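/- Let g ≥ 1 and m ≥ 2 be integers. The graph H(g, m) contains no cycle of length less than 2m + 2; in particular, if m = ℓ − 4 for an integer ℓ ≥ 6, then H(g, ℓ−4) has girth at least ℓ. -/

import Mathlib

open SimpleGraph

/-- The graph `H(g, m)`: a cycle `u_0 ⋯ u_{2(g+1)m - 1}` of length `2(g+1)m` (the
vertices `Sum.inl i`, the "outer cycle"), together with two extra vertices
`a = Sum.inr 0`, adjacent to `u_{2jm}` for `j = 0, …, g`, and `b = Sum.inr 1`,
adjacent to `u_{(2j+1)m}` for `j = 0, …, g`. -/
def HGraph (g m : ℕ) : SimpleGraph (Fin (2 * (g + 1) * m) ⊕ Fin 2) :=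
  SimpleGraph.fromRel (fun u v =>
    (∃ i j : Fin (2 * (g + 1) * m), u = .inl i ∧ v = .inl j ∧
      ((i : ℕ) + 1) % (2 * (g + 1) * m) = (j : ℕ)) ∨
    (∃ (i : Fin (2 * (g + 1) * m)) (j : ℕ), j ≤ g ∧ (i : ℕ) = 2 * j * m ∧
      u = .inr 0 ∧ v = .inl i) ∨
    (∃ (i : Fin (2 * (g + 1) * m)) (j : ℕ), j ≤ g ∧ (i : ℕ) = (2 * j + 1) * m ∧
      u = .inr 1 ∧ v = .inl i))

namespace HGraphAux

variable {g m : ℕ}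

lemma N_pos (hm : 2 ≤ m) : 0 < 2 * (g + 1) * m :=
  Nat.mul_pos (Nat.mul_pos (by omega) (Nat.succ_pos g)) (by omega)

lemma fin_eq_of_cast (hm : 2 ≤ m) {x y : Fin (2 * (g + 1) * m)}
    (h : ((x : ℕ) : ZMod (2 * (g + 1) * m)) = ((y : ℕ) : ZMod (2 * (g + 1) * m))) : x = y := by
  haveI : NeZero (2 * (g + 1) * m) := ⟨(N_pos hm).ne'⟩
  have h2 := congrArg ZMod.val h
  rw [ZMod.val_natCast_of_lt x.isLt, ZMod.val_natCast_of_lt y.isLt] at h2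
  exact Fin.ext h2

/-- Adjacency between two outer vertices. -/
lemma adj_inl_inl {k k' : Fin (2 * (g + 1) * m)}
    (h : (HGraph g m).Adj (.inl k) (.inl k')) :
    ((k : ℕ) + 1) % (2 * (g + 1) * m) = (k' : ℕ) ∨
      ((k' : ℕ) + 1) % (2 * (g + 1) * m) = (k : ℕ) := by
  rw [HGraph, fromRel_adj] at h
  obtain ⟨-, h | h⟩ := h
  · rcases h with ⟨i, j, hi, hj, hmod⟩ | ⟨i, j, _, _, hu, hv⟩ | ⟨i, j, _, _, hu, hv⟩
    · simp only [Sum.inl.injEq] at hi hj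
      subst hi; subst hj
      exact Or.inl hmod
    · exact absurd hu (by simp)
    · exact absurd hu (by simp)
  · rcases h with ⟨i, j, hi, hj, hmod⟩ | ⟨i, j, _, _, hu, hv⟩ | ⟨i, j, _, _, hu, hv⟩
    · simp only [Sum.inl.injEq] at hi hj
      subst hi; subst hj
      exact Or.inr hmod
    · exact absurd hu (by simp)
    · exact absurd hu (by simp)

/-- Adjacency at a hub vertex. -/
lemma adj_inr {t : Fin 2} {w : Fin (2 * (g + 1) * m) ⊕ Fin 2}
    (h : (HGraph g m).Adj (.inr t) w) :
    ∃ (i : Fin (2 * (g + 1) * m)) (j : ℕ), j ≤ g ∧ (i : ℕ) = 2 * j * m + (t : ℕ) * m ∧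
      w = .inl i := by
  rw [HGraph, fromRel_adj] at h
  obtain ⟨-, h | h⟩ := h
  · rcases h with ⟨i, j, hi, hj, hmod⟩ | ⟨i, j, hjg, him, hu, hv⟩ | ⟨i, j, hjg, him, hu, hv⟩
    · exact absurd hi (by simp)
    · obtain rfl : t = 0 := Sum.inr.inj hu
      exact ⟨i, j, hjg, by rw [him, Fin.val_zero]; omega, hv⟩
    · obtain rfl : t = 1 := Sum.inr.inj hu
      exact ⟨i, j, hjg, by rw [him, Fin.val_one]; ring, hv⟩
  · rcases h with ⟨i, j, hi, hj, hmod⟩ | ⟨i, j, hjg, him, hu, hv⟩ | ⟨i, j, hjg, him, hu, hv⟩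
    · exact absurd hj (by simp)
    · exact absurd hv (by simp)
    · exact absurd hv (by simp)

lemma adj_step (hm : 2 ≤ m) {i k : Fin (2 * (g + 1) * m)}
    (h : (HGraph g m).Adj (.inl i) (.inl k)) :
    ((k : ℕ) : ZMod (2 * (g + 1) * m)) = ((i : ℕ) : ZMod (2 * (g + 1) * m)) + 1 ∨
      ((i : ℕ) : ZMod (2 * (g + 1) * m)) = ((k : ℕ) : ZMod (2 * (g + 1) * m)) + 1 := by
  rcases adj_inl_inl h with h' | h'
  · left
    rw [← h']
    push_cast [ZMod.natCast_mod]
    ring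
  · right
    rw [← h']
    push_cast [ZMod.natCast_mod]
    ring

/-! ### The potential function -/

def pot (g m : ℕ) : Fin (2 * (g + 1) * m) ⊕ Fin 2 → ℤ
  | .inl i => ((min ((i : ℕ) % (2 * m)) (2 * m - (i : ℕ) % (2 * m)) : ℕ) : ℤ) + 1
  | .inr t => if t = 0 then 0 else (m : ℤ) + 2

lemma pot_step (hm : 2 ≤ m) (x y : ℕ) (hxy : y % (2 * m) = (x + 1) % (2 * m)) :
    |(((min (x % (2 * m)) (2 * m - x % (2 * m)) : ℕ) : ℤ) + 1) -
      (((min (y % (2 * m)) (2 * m - y % (2 * m)) : ℕ) : ℤ) + 1)| ≤ 1 := by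
  have h2m : 0 < 2 * m := by omega
  have hr : x % (2 * m) < 2 * m := Nat.mod_lt _ h2m
  have hstep : (x + 1) % (2 * m) = (x % (2 * m) + 1) % (2 * m) := by
    conv_lhs => rw [Nat.add_mod, Nat.mod_eq_of_lt (show 1 < 2 * m by omega)]
  rw [hstep] at hxy
  by_cases hcase : x % (2 * m) + 1 = 2 * m
  · have h1 : (x % (2 * m) + 1) % (2 * m) = 0 := by rw [hcase]; exact Nat.mod_self _
    rw [h1] at hxy
    rw [hxy, abs_le]
    omega
  · have h1 : (x % (2 * m) + 1) % (2 * m) = x % (2 * m) + 1 := Nat.mod_eq_of_lt (by omega)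
    rw [h1] at hxy
    rw [hxy, abs_le]
    omega

lemma pot_lipschitz (hm : 2 ≤ m) {u v : Fin (2 * (g + 1) * m) ⊕ Fin 2}
    (h : (HGraph g m).Adj u v) : |pot g m u - pot g m v| ≤ 1 := by
  have hdvd : (2 * m) ∣ (2 * (g + 1) * m) := ⟨g + 1, by ring⟩
  have key : ∀ u v : Fin (2 * (g + 1) * m) ⊕ Fin 2,
      ((∃ i j : Fin (2 * (g + 1) * m), u = .inl i ∧ v = .inl j ∧
        ((i : ℕ) + 1) % (2 * (g + 1) * m) = (j : ℕ)) ∨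
      (∃ (i : Fin (2 * (g + 1) * m)) (j : ℕ), j ≤ g ∧ (i : ℕ) = 2 * j * m ∧
        u = .inr 0 ∧ v = .inl i) ∨
      (∃ (i : Fin (2 * (g + 1) * m)) (j : ℕ), j ≤ g ∧ (i : ℕ) = (2 * j + 1) * m ∧
        u = .inr 1 ∧ v = .inl i)) → |pot g m u - pot g m v| ≤ 1 := by
    rintro u v (⟨i, j, rfl, rfl, hmod⟩ | ⟨i, j, hjg, him, rfl, rfl⟩ |
      ⟨i, j, hjg, him, rfl, rfl⟩)
    · simp only [pot]
      apply pot_step hm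
      rw [← hmod, Nat.mod_mod_of_dvd _ hdvd]
    · simp only [pot]
      rw [if_pos trivial]
      have hmod0 : (i : ℕ) % (2 * m) = 0 := by
        rw [him, show 2 * j * m = (2 * m) * j by ring]
        exact Nat.mul_mod_right _ _
      rw [hmod0, abs_le]
      omega
    · simp only [pot]
      rw [if_neg (by decide)]
      have hmodm : (i : ℕ) % (2 * m) = m := by
        rw [him, show (2 * j + 1) * m = (2 * m) * j + m by ring, Nat.mul_add_mod,
          Nat.mod_eq_of_lt (by omega)]
      rw [hmodm, abs_le]
      omega
  rw [HGraph, fromRel_adj] at h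
  obtain ⟨-, h | h⟩ := h
  · exact key _ _ h
  · rw [abs_sub_comm]
    exact key _ _ h

lemma pot_bound (hm : 2 ≤ m) {u v : Fin (2 * (g + 1) * m) ⊕ Fin 2}
    (p : (HGraph g m).Walk u v) : |pot g m u - pot g m v| ≤ (p.length : ℤ) := by
  induction p with
  | nil => simp
  | @cons u x v h p ih =>
    calc |pot g m u - pot g m v| ≤ |pot g m u - pot g m x| + |pot g m x - pot g m v| :=
          abs_sub_le _ _ _
      _ ≤ 1 + p.length := add_le_add (pot_lipschitz hm h) ih
      _ = ((p.cons h).length : ℤ) := by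
          rw [Walk.length_cons]
          push_cast
          ring

lemma len_ab (hm : 2 ≤ m)
    (p : (HGraph g m).Walk (.inr 0) (.inr 1)) : m + 2 ≤ p.length := by
  have h := pot_bound hm p
  have e0 : pot g m (.inr 0) = 0 := by simp [pot]
  have e1 : pot g m (.inr 1) = (m : ℤ) + 2 := by
    simp only [pot]
    rw [if_neg (by decide)]
  rw [e0, e1, show (0 : ℤ) - ((m : ℤ) + 2) = -((m : ℤ) + 2) by ring, abs_neg,
    abs_of_nonneg (by positivity)] at h
  exact_mod_cast h

/-! ### Displacement of outer walks -/

lemma disp (hm : 2 ≤ m) {x y : Fin (2 * (g + 1) * m) ⊕ Fin 2}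
    (q : (HGraph g m).Walk x y) :
    ∀ {i j : Fin (2 * (g + 1) * m)}, x = .inl i → y = .inl j →
    (∀ w ∈ q.support, ∀ s : Fin 2, w ≠ .inr s) →
    ∃ S : ℤ, S.natAbs ≤ q.length ∧
      ((S : ZMod (2 * (g + 1) * m)) =
        ((j : ℕ) : ZMod (2 * (g + 1) * m)) - ((i : ℕ) : ZMod (2 * (g + 1) * m))) := by
  induction q with
  | nil =>
    intro i j hx hy hall
    subst hx
    obtain rfl : i = j := by injection hy
    exact ⟨0, by simp, by simp⟩
  | @cons u w y h p ih =>
    intro i j hx hy hall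
    subst hx
    obtain ⟨k, rfl⟩ : ∃ k, w = Sum.inl k := by
      cases w with
      | inl k => exact ⟨k, rfl⟩
      | inr s => exact absurd rfl (hall _ (by simp) s)
    obtain ⟨S', hlen, hS'⟩ := ih rfl hy
      (fun w' hw' s => hall w' (by rw [Walk.support_cons]; exact List.mem_cons_of_mem _ hw') s)
    rcases adj_step hm h with hk | hk
    · refine ⟨S' + 1, ?_, ?_⟩
      · calc (S' + 1).natAbs ≤ S'.natAbs + (1 : ℤ).natAbs := Int.natAbs_add_le _ _
          _ ≤ p.length + 1 := by simp; omega
          _ = (p.cons h).length := (Walk.length_cons _ _).symm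
      · push_cast
        linear_combination hS' - hk
    · refine ⟨S' - 1, ?_, ?_⟩
      · calc (S' - 1).natAbs ≤ S'.natAbs + ((-1 : ℤ)).natAbs := by
              rw [sub_eq_add_neg]; exact Int.natAbs_add_le _ _
          _ ≤ p.length + 1 := by simp; omega
          _ = (p.cons h).length := (Walk.length_cons _ _).symm
      · push_cast
        linear_combination hS' + hk

/-! ### Monotone outer trails -/

lemma mono (hm : 2 ≤ m) {x y : Fin (2 * (g + 1) * m) ⊕ Fin 2}
    (q : (HGraph g m).Walk x y) :
    ∀ {i j : Fin (2 * (g + 1) * m)}, x = .inl i → y = .inl j →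
    (∀ w ∈ q.support, ∀ s : Fin 2, w ≠ .inr s) →
    q.edges.Nodup →
    ∃ ε : ZMod (2 * (g + 1) * m), (ε = 1 ∨ ε = -1) ∧
      ((j : ℕ) : ZMod (2 * (g + 1) * m)) = ((i : ℕ) : ZMod (2 * (g + 1) * m)) + ε * q.length ∧
      (1 ≤ q.length → ∀ k : Fin (2 * (g + 1) * m), q.getVert 1 = .inl k →
        ((k : ℕ) : ZMod (2 * (g + 1) * m)) = ((i : ℕ) : ZMod (2 * (g + 1) * m)) + ε) := by
  induction q with
  | nil =>
    intro i j hx hy hall hnd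
    subst hx
    obtain rfl : i = j := by injection hy
    exact ⟨1, Or.inl rfl, by simp, by simp⟩
  | @cons u w y h p ih =>
    intro i j hx hy hall hnd
    subst hx
    obtain ⟨k, rfl⟩ : ∃ k, w = Sum.inl k := by
      cases w with
      | inl k => exact ⟨k, rfl⟩
      | inr s => exact absurd rfl (hall _ (by simp) s)
    obtain ⟨ε0, hε0, hk⟩ : ∃ ε0 : ZMod (2 * (g + 1) * m), (ε0 = 1 ∨ ε0 = -1) ∧
        ((k : ℕ) : ZMod (2 * (g + 1) * m)) = ((i : ℕ) : ZMod (2 * (g + 1) * m)) + ε0 := by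
      rcases adj_step hm h with hk | hk
      · exact ⟨1, Or.inl rfl, hk⟩
      · exact ⟨-1, Or.inr rfl, by linear_combination -hk⟩
    cases p with
    | nil =>
      obtain rfl : k = j := by injection hy
      refine ⟨ε0, hε0, by simpa using hk, ?_⟩
      intro _ k' hk'
      have h2 : (Sum.inl k : Fin (2 * (g + 1) * m) ⊕ Fin 2) = Sum.inl k' := by
        rw [← hk']
        simp [Walk.getVert_cons_succ, Walk.getVert_zero]
      obtain rfl : k = k' := by injection h2
      exact hk
    | @cons _ z _ h1 p' =>
      obtain ⟨k3, rfl⟩ : ∃ k3, z = Sum.inl k3 := by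
        cases z with
        | inl k3 => exact ⟨k3, rfl⟩
        | inr s =>
          refine absurd rfl (hall _ ?_ s)
          rw [Walk.support_cons]
          exact List.mem_cons_of_mem _ (by simp)
      obtain ⟨ε', hε', hform', hguard'⟩ :=
        ih rfl hy
          (fun w' hw' s => hall w' (by rw [Walk.support_cons]; exact List.mem_cons_of_mem _ hw') s)
          (List.Nodup.of_cons hnd)
      have hk3 : ((k3 : ℕ) : ZMod (2 * (g + 1) * m)) =
          ((k : ℕ) : ZMod (2 * (g + 1) * m)) + ε' := by
        apply hguard' (by simp)
        simp [Walk.getVert_cons_succ, Walk.getVert_zero]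
      have hik3 : i ≠ k3 := by
        intro hik
        subst hik
        have hhead : s(Sum.inl i, Sum.inl k) ∉ ((p'.cons h1).cons h).edges.tail := by
          have h3 := hnd
          rw [Walk.edges_cons] at h3
          exact (List.nodup_cons.mp h3).1
        apply hhead
        rw [Walk.edges_cons, List.tail_cons, Walk.edges_cons]
        rw [show s(Sum.inl i, Sum.inl k) = s(Sum.inl k, (Sum.inl i : Fin (2 * (g + 1) * m) ⊕ Fin 2)) from Sym2.eq_swap]
        exact List.mem_cons_self
      have hεε : ε' = ε0 := by
        rcases hε0 with rfl | rfl <;> rcases hε' with rfl | rfl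
        · rfl
        · exact absurd (fin_eq_of_cast hm (by rw [hk3, hk]; ring)) (Ne.symm hik3)
        · exact absurd (fin_eq_of_cast hm (by rw [hk3, hk]; ring)) (Ne.symm hik3)
        · rfl
      subst hεε
      refine ⟨ε', hε', ?_, ?_⟩
      · rw [hform', hk]
        simp only [Walk.length_cons]
        push_cast
        ring
      · intro _ k' hk'
        have h2 : (Sum.inl k : Fin (2 * (g + 1) * m) ⊕ Fin 2) = Sum.inl k' := by
          rw [← hk']
          simp [Walk.getVert_cons_succ, Walk.getVert_zero]
        obtain rfl : k = k' := by injection h2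
        exact hk

/-! ### The one-hub case -/

lemma one_hub (hg : 1 ≤ g) (hm : 2 ≤ m) (t : Fin 2)
    (d : (HGraph g m).Walk (.inr t) (.inr t)) (hd : d.IsCycle)
    (hall : ∀ s : Fin 2, (Sum.inr s : Fin (2 * (g + 1) * m) ⊕ Fin 2) ∈ d.support → s = t) :
    2 * m + 2 ≤ d.length := by
  cases d with
  | nil => exact absurd rfl hd.ne_nil
  | cons h p =>
    obtain ⟨y, Q, h2, hQ⟩ := Walk.exists_cons_eq_concat h p
    cases Q with
    | nil =>
      exfalso
      have h3 := hd.three_le_length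
      have h4 : (Walk.cons h p).length = 1 := by rw [hQ]; simp
      omega
    | @cons _ z _ h1 Q' =>
      rw [Walk.concat_cons] at hQ
      rw [hQ] at hd ⊢
      rw [hQ] at hall
      -- identify the two hub neighbours
      obtain ⟨u0, j0, hj0, hu0, hz⟩ := adj_inr h1
      subst hz
      obtain ⟨u1, j1, hj1, hu1, hy⟩ := adj_inr h2.symm
      subst hy
      -- `inr t` does not appear in `Q'.support`
      have hnt : (Sum.inr t : Fin (2 * (g + 1) * m) ⊕ Fin 2) ∉ Q'.support := by
        have h3 := hd.support_nodup
        rw [Walk.support_cons, List.tail_cons, Walk.support_concat] at h3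
        intro hmem
        exact (List.disjoint_of_nodup_append h3) hmem (by simp)
      -- all vertices of `Q'` are outer
      have hallQ : ∀ w ∈ Q'.support, ∀ s : Fin 2, w ≠ Sum.inr s := by
        intro w hw s hws
        subst hws
        have hs : s = t := by
          apply hall
          rw [Walk.support_cons]
          refine List.mem_cons_of_mem _ ?_
          rw [Walk.support_concat]
          exact List.mem_append_left _ hw
        subst hs
        exact hnt hw
      -- the two hub edges are distinct
      have hu01 : u0 ≠ u1 := by
        intro hEq
        subst hEq
        have h3 := hd.edges_nodup
        rw [Walk.edges_cons, Walk.edges_concat, List.concat_eq_append] at h3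
        have hne := (List.nodup_cons.mp h3).1
        apply hne
        refine List.mem_append_right _ ?_
        rw [show s(Sum.inl u0, (Sum.inr t : Fin (2 * (g + 1) * m) ⊕ Fin 2)) =
          s(Sum.inr t, (Sum.inl u0 : Fin (2 * (g + 1) * m) ⊕ Fin 2)) from Sym2.eq_swap]
        simp
      have hj01 : j0 ≠ j1 := by
        intro hEq
        subst hEq
        exact hu01 (Fin.ext (by omega))
      -- displacement
      obtain ⟨S, hSlen, hS⟩ := disp hm Q' rfl rfl hallQ
      -- turn the congruence into a divisibility
      have h0 : (((S - (u1 : ℕ)) + (u0 : ℕ) : ℤ) : ZMod (2 * (g + 1) * m)) = 0 := by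
        push_cast
        rw [hS]
        ring
      rw [ZMod.intCast_zmod_eq_zero_iff_dvd] at h0
      obtain ⟨c, hc⟩ := h0
      have hu0' : ((u0 : ℕ) : ℤ) = 2 * (j0 : ℤ) * m + (t : ℕ) * m := by exact_mod_cast hu0
      have hu1' : ((u1 : ℕ) : ℤ) = 2 * (j1 : ℤ) * m + (t : ℕ) * m := by exact_mod_cast hu1
      have hSK : S = 2 * m * ((j1 : ℤ) - (j0 : ℤ) + (g + 1) * c) := by
        have hN : ((2 * (g + 1) * m : ℕ) : ℤ) = 2 * ((g : ℤ) + 1) * m := by push_cast; ring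
        rw [hN] at hc
        linear_combination hc + hu1' - hu0'
      have hK : ((j1 : ℤ) - (j0 : ℤ) + (g + 1) * c) ≠ 0 := by
        intro hK0
        rcases lt_trichotomy c 0 with hc0 | hc0 | hc0
        · have h5 : ((g : ℤ) + 1) * c ≤ ((g : ℤ) + 1) * (-1) := by
            apply mul_le_mul_of_nonneg_left (by omega) (by positivity)
          have h6 : (j1 : ℤ) ≤ g := by exact_mod_cast hj1
          have h7 : (0 : ℤ) ≤ j0 := by positivity
          omega
        · subst hc0
          have : (j1 : ℤ) = j0 := by omega
          exact hj01 (by exact_mod_cast this.symm)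
        · have h5 : ((g : ℤ) + 1) * 1 ≤ ((g : ℤ) + 1) * c := by
            apply mul_le_mul_of_nonneg_left (by omega) (by positivity)
          have h6 : (j0 : ℤ) ≤ g := by exact_mod_cast hj0
          have h7 : (0 : ℤ) ≤ j1 := by positivity
          omega
      have habs : (2 * m : ℤ) ≤ |S| := by
        rw [hSK, abs_mul]
        have h5 : (1 : ℤ) ≤ |(j1 : ℤ) - (j0 : ℤ) + (g + 1) * c| := Int.one_le_abs hK
        have h6 : |(2 * (m : ℤ))| = 2 * m := abs_of_nonneg (by positivity)
        nlinarith [abs_nonneg ((j1 : ℤ) - (j0 : ℤ) + (g + 1) * c)]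
      have hlen : 2 * m ≤ Q'.length := by
        have h5 : (2 * m : ℤ) ≤ (S.natAbs : ℤ) := by rwa [Int.abs_eq_natAbs] at habs
        have h6 : 2 * m ≤ S.natAbs := by exact_mod_cast h5
        omega
      have h7 : (Walk.cons h1 (Q'.concat h2)).length = Q'.length + 2 := by
        rw [Walk.length_cons, Walk.length_concat]
      omega

end HGraphAux

open HGraphAux in
theorem stmt13 (g m : ℕ) (hg : 1 ≤ g) (hm : 2 ≤ m) :
    (∀ (v : Fin (2 * (g + 1) * m) ⊕ Fin 2) (c : (HGraph g m).Walk v v),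
      c.IsCycle → 2 * m + 2 ≤ c.length) ∧
    (∀ ℓ : ℕ, 6 ≤ ℓ → m = ℓ - 4 →
      ∀ (v : Fin (2 * (g + 1) * m) ⊕ Fin 2) (c : (HGraph g m).Walk v v),
        c.IsCycle → ℓ ≤ c.length) := by
  have main : ∀ (v : Fin (2 * (g + 1) * m) ⊕ Fin 2) (c : (HGraph g m).Walk v v),
      c.IsCycle → 2 * m + 2 ≤ c.length := by
    intro v c hc
    rcases Classical.em ((Sum.inr 0 : Fin (2 * (g + 1) * m) ⊕ Fin 2) ∈ c.support) with ha | ha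
    · rcases Classical.em ((Sum.inr 1 : Fin (2 * (g + 1) * m) ⊕ Fin 2) ∈ c.support) with hb | hb
      · -- both hubs on the cycle
        have hb' := hb
        rw [← Walk.take_spec c hb, Walk.mem_support_append_iff] at ha
        have hsum : (c.takeUntil _ hb).length + (c.dropUntil _ hb).length = c.length := by
          rw [← Walk.length_append, Walk.take_spec]
        rcases ha with ha1 | ha2
        · set q1 := c.takeUntil _ hb with hq1
          set q2 := c.dropUntil _ hb with hq2
          have hsum2 : (q1.takeUntil _ ha1).length + (q1.dropUntil _ ha1).length = q1.length := by
            rw [← Walk.length_append, Walk.take_spec]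
          have hr2 : m + 2 ≤ (q1.dropUntil _ ha1).length := len_ab hm _
          have hr1 : m + 2 ≤ (q2.append (q1.takeUntil _ ha1)).reverse.length := len_ab hm _
          rw [Walk.length_reverse, Walk.length_append] at hr1
          omega
        · set q1 := c.takeUntil _ hb with hq1
          set q2 := c.dropUntil _ hb with hq2
          have hsum2 : (q2.takeUntil _ ha2).length + (q2.dropUntil _ ha2).length = q2.length := by
            rw [← Walk.length_append, Walk.take_spec]
          have hr1 : m + 2 ≤ (q2.takeUntil _ ha2).reverse.length := len_ab hm _
          rw [Walk.length_reverse] at hr1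
          have hr2 : m + 2 ≤ ((q2.dropUntil _ ha2).append q1).length := len_ab hm _
          rw [Walk.length_append] at hr2
          omega
      · -- only hub `a`
        have hd := hc.rotate ha
        have hlen : (c.rotate _ ha).length = c.length := by
          rw [← Walk.length_darts, ← Walk.length_darts]
          exact (Walk.rotate_darts c _ ha).perm.length_eq
        have hall : ∀ s : Fin 2,
            (Sum.inr s : Fin (2 * (g + 1) * m) ⊕ Fin 2) ∈ (c.rotate _ ha).support → s = 0 := by
          intro s hs
          by_contra hs0
          have hs1 : s = 1 := by omega
          subst hs1
          apply hb
          have htail : (Sum.inr 1 : Fin (2 * (g + 1) * m) ⊕ Fin 2) ∈ (c.rotate _ ha).support.tail := by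
            have hs2 := hs
            rw [Walk.support_eq_cons] at hs2
            rcases List.mem_cons.mp hs2 with hs' | hs'
            · exact absurd hs' (by simp)
            · exact hs'
          have := (Walk.support_rotate c _ ha).mem_iff.mp htail
          exact List.mem_of_mem_tail this
        have := one_hub hg hm 0 (c.rotate _ ha) hd hall
        omega
    · rcases Classical.em ((Sum.inr 1 : Fin (2 * (g + 1) * m) ⊕ Fin 2) ∈ c.support) with hb | hb
      · -- only hub `b`
        have hd := hc.rotate hb
        have hlen : (c.rotate _ hb).length = c.length := by
          rw [← Walk.length_darts, ← Walk.length_darts]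
          exact (Walk.rotate_darts c _ hb).perm.length_eq
        have hall : ∀ s : Fin 2,
            (Sum.inr s : Fin (2 * (g + 1) * m) ⊕ Fin 2) ∈ (c.rotate _ hb).support → s = 1 := by
          intro s hs
          by_contra hs0
          have hs1 : s = 0 := by omega
          subst hs1
          apply ha
          have htail : (Sum.inr 0 : Fin (2 * (g + 1) * m) ⊕ Fin 2) ∈ (c.rotate _ hb).support.tail := by
            have hs2 := hs
            rw [Walk.support_eq_cons] at hs2
            rcases List.mem_cons.mp hs2 with hs' | hs'
            · exact absurd hs' (by simp)
            · exact hs'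
          have := (Walk.support_rotate c _ hb).mem_iff.mp htail
          exact List.mem_of_mem_tail this
        have := one_hub hg hm 1 (c.rotate _ hb) hd hall
        omega
      · -- no hub on the cycle
        have hall : ∀ w ∈ c.support, ∀ s : Fin 2, w ≠ Sum.inr s := by
          intro w hw s hws
          subst hws
          have : s = 0 ∨ s = 1 := by omega
          rcases this with rfl | rfl
          · exact ha hw
          · exact hb hw
        obtain ⟨i, rfl⟩ : ∃ i, v = Sum.inl i := by
          cases v with
          | inl i => exact ⟨i, rfl⟩
          | inr s => exact absurd rfl (hall _ (Walk.start_mem_support c) s)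
        obtain ⟨ε, hε, hform, -⟩ := mono hm c rfl rfl hall hc.edges_nodup
        have hzero : ((c.length : ℕ) : ZMod (2 * (g + 1) * m)) = 0 := by
          have h5 : ε * (c.length : ZMod (2 * (g + 1) * m)) = 0 := by
            linear_combination hform.symm
          rcases hε with rfl | rfl
          · rwa [one_mul] at h5
          · rw [neg_mul, neg_eq_zero, one_mul] at h5
            exact h5
        rw [ZMod.natCast_eq_zero_iff] at hzero
        have h3 := hc.three_le_length
        have hNle : 2 * (g + 1) * m ≤ c.length := Nat.le_of_dvd (by omega) hzero
        have h4 : 2 * 2 * m ≤ 2 * (g + 1) * m := Nat.mul_le_mul_right m (by omega)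
        omega
  constructor
  · exact main
  · intro ℓ hℓ hmℓ v c hc
    have := main v c hc
    omega
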